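/- Let F₁/E and F₂/E be finite abelian Galois extensions of fields with F₁ ∩ F₂ = E, and let F = F₁F₂. For i = 1,2 let x_i ∈ F_i satisfy Tr_{F_i/E}(g(x_i)·h(x_i)) = δ_{g,h} for all g,h ∈ Gal(F_i/E). Then the product x₁x₂ satisfies Tr_{F/E}(σ(x₁x₂)·τ(x₁x₂)) = δ_{σ,τ} for all σ,τ ∈ Gal(F/E); i.e., x₁x₂ is a self-dual element of F/E. -/
import Mathlib

open scoped Classical
open IntermediateField

set_option linter.unusedSectionVars false
set_option maxHeartbeats 1000000
set_option synthInstance.maxHeartbeats 400000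

section Aux

variable {E F : Type*} [Field E] [Field F] [Algebra E F] [FiniteDimensional E F]

lemma sd_fixingSubgroup_bot (K L : Type*) [Field K] [Field L] [Algebra K L] :
    IntermediateField.fixingSubgroup (⊥ : IntermediateField K L) = ⊤ := by
  ext g
  simp only [Subgroup.mem_top, iff_true]
  intro y
  obtain ⟨e, he⟩ := IntermediateField.mem_bot.1 y.2
  have : (y : L) = algebraMap K L e := he.symm
  show g • (y : L) = y
  rw [this, AlgEquiv.smul_def, AlgEquiv.commutes]

lemma sd_aux_ext (F₁ F₂ : IntermediateField E F) (hsup : F₁ ⊔ F₂ = ⊤)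
    {σ τ : F ≃ₐ[E] F} (h1 : ∀ x : F₁, σ (x : F) = τ (x : F))
    (h2 : ∀ x : F₂, σ (x : F) = τ (x : F)) : σ = τ := by
  let K : IntermediateField E F :=
    (AlgHom.equalizer σ.toAlgHom τ.toAlgHom).toIntermediateField (fun x hx => by
      simpa [AlgHom.mem_equalizer, map_inv₀] using congrArg (·⁻¹) hx)
  have hK : ⊤ ≤ K := by
    rw [← hsup]
    exact sup_le (fun y hy => h1 ⟨y, hy⟩) (fun y hy => h2 ⟨y, hy⟩)
  exact AlgEquiv.ext fun x => hK (trivial : x ∈ (⊤ : IntermediateField E F))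

lemma sd_psi_surj (F₁ F₂ : IntermediateField E F) [IsGalois E F] [IsGalois E F₂]
    (hinf : F₁ ⊓ F₂ = ⊥) (h : F₂ ≃ₐ[E] F₂) :
    ∃ ν : F ≃ₐ[F₁] F,
      AlgEquiv.restrictNormalHom F₂ (ν.restrictScalars E) = h := by
  let ψ : (F ≃ₐ[F₁] F) →* (F₂ ≃ₐ[E] F₂) :=
    MonoidHom.mk' (fun ν => AlgEquiv.restrictNormalHom F₂ (ν.restrictScalars E))
      (fun a b => by
        show AlgEquiv.restrictNormalHom ↥F₂ ((a * b).restrictScalars E) = _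
        rw [show (a * b).restrictScalars E
          = a.restrictScalars E * b.restrictScalars E from rfl, map_mul])
  suffices hr : ψ.range = ⊤ by
    have : h ∈ ψ.range := hr ▸ Subgroup.mem_top h
    obtain ⟨ν, hν⟩ := this
    exact ⟨ν, hν⟩
  have hfix : IntermediateField.fixedField ψ.range = ⊥ := by
    refine le_antisymm (fun x hx => ?_) bot_le
    have hF : ∀ ν : F ≃ₐ[F₁] F, ν (x : F) = (x : F) := by
      intro ν
      have h1 : ψ ν x = x := hx ⟨ψ ν, ⟨ν, rfl⟩⟩
      have h2 : ((ψ ν x : F₂) : F) = (ν.restrictScalars E) (x : F) :=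
        AlgEquiv.restrictNormalHom_apply F₂ (ν.restrictScalars E) x
      rw [h1] at h2
      exact h2.symm
    have hx1 : (x : F) ∈ F₁ := by
      have htop : IntermediateField.fixedField (⊤ : Subgroup (F ≃ₐ[F₁] F))
          = (⊥ : IntermediateField F₁ F) := by
        rw [← sd_fixingSubgroup_bot F₁ F, IsGalois.fixedField_fixingSubgroup]
      have hmem : (x : F) ∈ IntermediateField.fixedField (⊤ : Subgroup (F ≃ₐ[F₁] F)) :=
        fun g => hF g
      rw [htop, IntermediateField.mem_bot] at hmem
      obtain ⟨z, hz⟩ := hmem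
      rw [← hz]
      exact (z : F₁).2
    have hx2 : (x : F) ∈ F₁ ⊓ F₂ := ⟨hx1, x.2⟩
    rw [hinf, IntermediateField.mem_bot] at hx2
    obtain ⟨e, he⟩ := hx2
    rw [IntermediateField.mem_bot]
    refine ⟨e, ?_⟩
    apply Subtype.ext
    rw [← he, IsScalarTower.algebraMap_apply E F₂ F]
    rfl
  calc ψ.range = IntermediateField.fixingSubgroup (IntermediateField.fixedField ψ.range) :=
        (IntermediateField.fixingSubgroup_fixedField ψ.range).symm
    _ = ⊤ := by rw [hfix, sd_fixingSubgroup_bot]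

/-- joint restriction is bijective -/
lemma sd_joint_bij (F₁ F₂ : IntermediateField E F) [IsGalois E F] [IsGalois E F₁] [IsGalois E F₂]
    (hinf : F₁ ⊓ F₂ = ⊥) (hsup : F₁ ⊔ F₂ = ⊤) :
    Function.Bijective (fun σ : F ≃ₐ[E] F =>
      (AlgEquiv.restrictNormalHom F₁ σ, AlgEquiv.restrictNormalHom F₂ σ)) := by
  constructor
  · intro σ τ hστ
    rw [Prod.ext_iff] at hστ
    dsimp only at hστ
    refine sd_aux_ext F₁ F₂ hsup (fun x => ?_) (fun x => ?_)
    · rw [← AlgEquiv.restrictNormalHom_apply F₁ σ x, ← AlgEquiv.restrictNormalHom_apply F₁ τ x,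
        hστ.1]
    · rw [← AlgEquiv.restrictNormalHom_apply F₂ σ x, ← AlgEquiv.restrictNormalHom_apply F₂ τ x,
        hστ.2]
  · rintro ⟨g, h⟩
    obtain ⟨γ, hγ⟩ := AlgEquiv.restrictNormalHom_surjective (K₁ := F₁) (E := F) g
    obtain ⟨ν, hν⟩ := sd_psi_surj F₁ F₂ hinf ((AlgEquiv.restrictNormalHom F₂ γ)⁻¹ * h)
    refine ⟨γ * ν.restrictScalars E, ?_⟩
    have h1 : AlgEquiv.restrictNormalHom F₁ (ν.restrictScalars E) = 1 := by
      refine AlgEquiv.ext fun x => Subtype.ext ?_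
      have := AlgEquiv.restrictNormalHom_apply F₁ (ν.restrictScalars E) x
      rw [this]
      show ν ((x : F₁) : F) = ((x : F₁) : F)
      have : ((x : F₁) : F) = algebraMap F₁ F x := rfl
      rw [this, AlgEquiv.commutes]
    show (AlgEquiv.restrictNormalHom F₁ (γ * ν.restrictScalars E),
        AlgEquiv.restrictNormalHom F₂ (γ * ν.restrictScalars E)) = (g, h)
    rw [map_mul, map_mul, h1, hγ, hν, mul_one, mul_inv_cancel_left]

end Aux

section Aux2

variable {E F : Type*} [Field E] [Field F] [Algebra E F] [FiniteDimensional E F]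

lemma sd_trace_mul (F₁ F₂ : IntermediateField E F) [IsGalois E F] [IsGalois E F₁] [IsGalois E F₂]
    (hinf : F₁ ⊓ F₂ = ⊥) (hsup : F₁ ⊔ F₂ = ⊤) (a : F₁) (b : F₂) :
    Algebra.trace E F ((a : F) * (b : F)) = Algebra.trace E F₁ a * Algebra.trace E F₂ b := by
  apply (algebraMap E F).injective
  rw [RingHom.map_mul]
  have ha : algebraMap E F (Algebra.trace E F₁ a) = ∑ g : F₁ ≃ₐ[E] F₁, ((g a : F₁) : F) := by
    rw [IsScalarTower.algebraMap_apply E F₁ F, trace_eq_sum_automorphisms, map_sum]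
    rfl
  have hb : algebraMap E F (Algebra.trace E F₂ b) = ∑ h : F₂ ≃ₐ[E] F₂, ((h b : F₂) : F) := by
    rw [IsScalarTower.algebraMap_apply E F₂ F, trace_eq_sum_automorphisms, map_sum]
    rfl
  rw [trace_eq_sum_automorphisms, ha, hb, Finset.sum_mul_sum]
  rw [← Finset.sum_product', Finset.univ_product_univ]
  let e : (F ≃ₐ[E] F) ≃ (F₁ ≃ₐ[E] F₁) × (F₂ ≃ₐ[E] F₂) :=
    Equiv.ofBijective _ (sd_joint_bij F₁ F₂ hinf hsup)
  rw [← Equiv.sum_comp e (fun p => ((p.1 a : F₁) : F) * ((p.2 b : F₂) : F))]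
  · apply Finset.sum_congr rfl
    intro σ _
    have h1 : ((AlgEquiv.restrictNormalHom F₁ σ a : F₁) : F) = σ (a : F) :=
      AlgEquiv.restrictNormalHom_apply F₁ σ a
    have h2 : ((AlgEquiv.restrictNormalHom F₂ σ b : F₂) : F) = σ (b : F) :=
      AlgEquiv.restrictNormalHom_apply F₂ σ b
    calc σ ((a : F) * (b : F)) = σ (a : F) * σ (b : F) := map_mul σ _ _
      _ = ((AlgEquiv.restrictNormalHom F₁ σ a : F₁) : F)
            * ((AlgEquiv.restrictNormalHom F₂ σ b : F₂) : F) := by rw [h1, h2]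
      _ = ((e σ).1 a : F₁) * ((e σ).2 b : F₂) := rfl

end Aux2

/-- If `F₁/E` and `F₂/E` are finite abelian Galois extensions inside `F`
with `F₁ ∩ F₂ = E` and `F = F₁F₂`, and `xᵢ ∈ Fᵢ` are self-dual elements
(`Tr(g xᵢ · h xᵢ) = δ_{g,h}`), then `x₁x₂` is a self-dual element of `F/E`. -/
theorem stmt_7 (E F : Type*) [Field E] [Field F] [Algebra E F] [FiniteDimensional E F]
    (F₁ F₂ : IntermediateField E F)
    [IsGalois E F₁] [IsGalois E F₂]
    (hab₁ : ∀ σ τ : F₁ ≃ₐ[E] F₁, σ * τ = τ * σ)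
    (hab₂ : ∀ σ τ : F₂ ≃ₐ[E] F₂, σ * τ = τ * σ)
    (hinf : F₁ ⊓ F₂ = ⊥) (hsup : F₁ ⊔ F₂ = ⊤)
    (x₁ : F₁) (x₂ : F₂)
    (hx₁ : ∀ g h : F₁ ≃ₐ[E] F₁,
      Algebra.trace E F₁ (g x₁ * h x₁) = if g = h then 1 else 0)
    (hx₂ : ∀ g h : F₂ ≃ₐ[E] F₂,
      Algebra.trace E F₂ (g x₂ * h x₂) = if g = h then 1 else 0) :
    ∀ σ τ : F ≃ₐ[E] F,
      Algebra.trace E F (σ ((x₁ : F) * (x₂ : F)) * τ ((x₁ : F) * (x₂ : F))) =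
        if σ = τ then 1 else 0 := by
  haveI h1 : IsGalois E (⊤ : IntermediateField E F) :=
    hsup ▸ (inferInstance : IsGalois E ↥(F₁ ⊔ F₂))
  haveI hG : IsGalois E F := IsGalois.of_algEquiv IntermediateField.topEquiv
  intro σ τ
  have hσ1 : σ (x₁ : F) = ((AlgEquiv.restrictNormalHom F₁ σ x₁ : F₁) : F) :=
    (AlgEquiv.restrictNormalHom_apply F₁ σ x₁).symm
  have hσ2 : σ (x₂ : F) = ((AlgEquiv.restrictNormalHom F₂ σ x₂ : F₂) : F) :=
    (AlgEquiv.restrictNormalHom_apply F₂ σ x₂).symm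
  have hτ1 : τ (x₁ : F) = ((AlgEquiv.restrictNormalHom F₁ τ x₁ : F₁) : F) :=
    (AlgEquiv.restrictNormalHom_apply F₁ τ x₁).symm
  have hτ2 : τ (x₂ : F) = ((AlgEquiv.restrictNormalHom F₂ τ x₂ : F₂) : F) :=
    (AlgEquiv.restrictNormalHom_apply F₂ τ x₂).symm
  have key : σ ((x₁ : F) * (x₂ : F)) * τ ((x₁ : F) * (x₂ : F))
      = ((AlgEquiv.restrictNormalHom F₁ σ x₁ * AlgEquiv.restrictNormalHom F₁ τ x₁ : F₁) : F)
        * ((AlgEquiv.restrictNormalHom F₂ σ x₂ * AlgEquiv.restrictNormalHom F₂ τ x₂ : F₂) : F) := by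
    rw [map_mul σ, map_mul τ, hσ1, hσ2, hτ1, hτ2, MulMemClass.coe_mul, MulMemClass.coe_mul]
    ring
  rw [key, sd_trace_mul F₁ F₂ hinf hsup, hx₁, hx₂]
  by_cases hστ : σ = τ
  · subst hστ; simp
  · have hne : ¬(AlgEquiv.restrictNormalHom F₁ σ = AlgEquiv.restrictNormalHom F₁ τ
        ∧ AlgEquiv.restrictNormalHom F₂ σ = AlgEquiv.restrictNormalHom F₂ τ) := by
      rintro ⟨e1, e2⟩
      exact hστ (sd_aux_ext F₁ F₂ hsup
        (fun x => by rw [← AlgEquiv.restrictNormalHom_apply F₁ σ x,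
          ← AlgEquiv.restrictNormalHom_apply F₁ τ x, e1])
        (fun x => by rw [← AlgEquiv.restrictNormalHom_apply F₂ σ x,
          ← AlgEquiv.restrictNormalHom_apply F₂ τ x, e2]))
    rw [if_neg hστ]
    rcases not_and_or.1 hne with h | h
    · rw [if_neg h, zero_mul]
    · rw [if_neg h, mul_zero]
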